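/- Let Γ be a finite acyclic directed graph in which between any two nodes there is at most one directed path, and suppose there is an edge (i,k) and a directed path from k to a node j such that i does not lie on this path. Let G be any weighted adjacency matrix consistent with Γ (G_{lm} ≠ 0 only if (m,l) is an edge) with I−G invertible; set T = (I−G)^{-1}. Then T_{ji} = T_{jk} · G_{ki}. In particular, if T_{jk} ≠ 0 then G_{ki} = T_{ji} / T_{jk}. -/

import Mathlib

/-- Number of directed walks of length `k` from `u` to `v`. -/
def walkCount {n : ℕ} (E : Fin n → Fin n → Prop) [DecidableRel E] :
    ℕ → Fin n → Fin n → ℕ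
  | 0, u, v => if u = v then 1 else 0
  | k + 1, u, v => ∑ w : Fin n, walkCount E k u w * (if E w v then 1 else 0)

section Aux

variable {n : ℕ} (E : Fin n → Fin n → Prop) [DecidableRel E]

/-- The 0/1 adjacency matrix of `E` over `ℕ`. -/
def adjM : Matrix (Fin n) (Fin n) ℕ := Matrix.of fun a b => if E a b then 1 else 0

lemma walkCount_eq_pow (m : ℕ) (u v : Fin n) :
    walkCount E m u v = ((adjM E) ^ m) u v := by
  induction m generalizing v with
  | zero => simp [walkCount, Matrix.one_apply]
  | succ k ih =>
      rw [pow_succ, Matrix.mul_apply]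
      simp only [walkCount, ih, adjM, Matrix.of_apply]

lemma walkCount_succ_left (m : ℕ) (u v : Fin n) :
    walkCount E (m + 1) u v
      = ∑ w : Fin n, (if E u w then 1 else 0) * walkCount E m w v := by
  simp only [walkCount_eq_pow, pow_succ']
  rw [Matrix.mul_apply]
  simp [adjM]

/-- There is a directed walk with `m` edges from `u` to `v`. -/
def IsWalk (m : ℕ) (u v : Fin n) : Prop :=
  ∃ w : List (Fin n), w.Chain' E ∧ w.length = m + 1 ∧
    w.head? = some u ∧ w.getLast? = some v

lemma IsWalk.cons {m : ℕ} {u v x : Fin n} (h : IsWalk E m u v) (hx : E x u) :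
    IsWalk E (m + 1) x v := by
  obtain ⟨w, hc, hlen, hh, hlast⟩ := h
  refine ⟨x :: w, ?_, by simp [hlen], rfl, ?_⟩
  · exact List.isChain_cons.2 ⟨fun y hy => by rw [hh] at hy; simp_all, hc⟩
  · cases w with
    | nil => simp at hh
    | cons a t => simpa using hlast

lemma one_le_walkCount : ∀ (m : ℕ) (u v : Fin n), IsWalk E m u v → 1 ≤ walkCount E m u v := by
  intro m
  induction m with
  | zero =>
      rintro u v ⟨w, hc, hlen, hh, hlast⟩
      obtain ⟨x, rfl⟩ := List.length_eq_one_iff.mp hlen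
      simp only [List.head?_cons, Option.some_inj] at hh
      simp only [List.getLast?_singleton, Option.some_inj] at hlast
      subst hh; subst hlast
      simp [walkCount]
  | succ k ih =>
      rintro u v ⟨w, hc, hlen, hh, hlast⟩
      match w, hlen with
      | u' :: x :: t, hlen =>
        simp only [List.head?_cons, Option.some_inj] at hh
        subst hh
        rw [List.Chain', List.isChain_cons] at hc
        have hEux : E u' x := hc.1 x rfl
        have hw : IsWalk E k x v :=
          ⟨x :: t, hc.2, by simpa using hlen, rfl, by simpa using hlast⟩
        rw [walkCount_succ_left]
        calc 1 ≤ (if E u' x then 1 else 0) * walkCount E k x v := by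
              simp [hEux]; exact ih x v hw
          _ ≤ _ := Finset.single_le_sum (f := fun w => (if E u' w then 1 else 0) * walkCount E k w v)
                (fun i _ => Nat.zero_le _) (Finset.mem_univ x)

lemma isWalk_of_walkCount_ne_zero :
    ∀ (m : ℕ) (u v : Fin n), walkCount E m u v ≠ 0 → IsWalk E m u v := by
  intro m
  induction m with
  | zero =>
      intro u v h
      simp only [walkCount, ne_eq, ite_eq_right_iff, Classical.not_imp] at h
      exact ⟨[u], List.isChain_singleton _, by simp, rfl, by simp [h.1]⟩
  | succ k ih =>
      intro u v h
      rw [walkCount_succ_left] at h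
      obtain ⟨x, -, hx⟩ := Finset.exists_ne_zero_of_sum_ne_zero h
      have hEux : E u x := by by_contra hne; simp [hne] at hx
      have hcnt : walkCount E k x v ≠ 0 := by simp [hEux] at hx; exact hx
      exact (ih x v hcnt).cons E hEux

lemma exists_closed_of_not_nodup :
    ∀ (w : List (Fin n)), w.Chain' E → ¬ w.Nodup → ∃ v c, 1 ≤ c ∧ IsWalk E c v v := by
  intro w
  induction w with
  | nil => intro _ h; simp at h
  | cons x t ih =>
      intro hc hnd
      rw [List.nodup_cons] at hnd
      push_neg at hnd
      by_cases hx : x ∈ t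
      · obtain ⟨s, t', rfl⟩ := List.append_of_mem hx
        refine ⟨x, s.length + 1, by omega, (x :: s) ++ [x], ?_, by simp, by simp,
          List.getLast?_concat⟩
        exact hc.prefix (by
          refine ⟨t', ?_⟩
          simp)
      · exact ih hc.tail (hnd (fun h => absurd h hx))

lemma chain'_nodup (hacyclic : ∀ v : Fin n, ∀ k, 1 ≤ k → walkCount E k v v = 0)
    (w : List (Fin n)) (hc : w.Chain' E) : w.Nodup := by
  by_contra h
  obtain ⟨v, c, hc1, hw⟩ := exists_closed_of_not_nodup E w hc h
  have h1 := one_le_walkCount E c v v hw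
  rw [hacyclic v c hc1] at h1
  omega

lemma isWalk_len_le (hacyclic : ∀ v : Fin n, ∀ k, 1 ≤ k → walkCount E k v v = 0)
    {m : ℕ} {u v : Fin n} (h : IsWalk E m u v) : m + 1 ≤ n := by
  obtain ⟨w, hc, hlen, -, -⟩ := h
  have := (chain'_nodup E hacyclic w hc).length_le_card
  simpa [hlen] using this

lemma two_le_walkCount (m : ℕ) (i j a k : Fin n) (hak : a ≠ k)
    (hia : E i a) (hik : E i k) (hwa : IsWalk E m a j) (hwk : IsWalk E m k j) :
    2 ≤ walkCount E (m + 1) i j := by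
  rw [walkCount_succ_left]
  have h1 := one_le_walkCount E m a j hwa
  have h2 := one_le_walkCount E m k j hwk
  calc 2 ≤ ∑ w ∈ ({a, k} : Finset (Fin n)),
          (if E i w then 1 else 0) * walkCount E m w j := by
        rw [Finset.sum_pair hak]
        simp only [hia, hik, if_pos, one_mul]
        omega
    _ ≤ _ := Finset.sum_le_sum_of_subset (Finset.subset_univ _)

lemma isWalk_of_pow_ne_zero {F : Type*} [Field F]
    (G : Matrix (Fin n) (Fin n) F) (hG : ∀ a b, G a b ≠ 0 → E b a) :
    ∀ (m : ℕ) (a b : Fin n), (G ^ m) b a ≠ 0 → IsWalk E m a b := by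
  intro m
  induction m with
  | zero =>
      intro a b h
      rw [pow_zero] at h
      have hba : b = a := by
        by_contra hne
        rw [Matrix.one_apply_ne hne] at h
        exact h rfl
      exact ⟨[a], List.isChain_singleton _, by simp, rfl, by simp [hba]⟩
  | succ k ih =>
      intro a b h
      rw [pow_succ, Matrix.mul_apply] at h
      obtain ⟨c, -, hc⟩ := Finset.exists_ne_zero_of_sum_ne_zero h
      have h1 : (G ^ k) b c ≠ 0 := fun hz => hc (by simp [hz])
      have h2 : G c a ≠ 0 := fun hz => hc (by simp [hz])
      exact (ih c b h1).cons E (hG c a h2)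

end Aux

/-- In a finite acyclic digraph where any two nodes are joined by at most one
directed path, if `(i,k)` is an edge and there is a directed path from `k` to
`j` not containing `i`, then `T_{ji} = T_{jk} · G_{ki}`; in particular, if
`T_{jk} ≠ 0` then `G_{ki} = T_{ji} / T_{jk}`. -/
theorem stmt10 {n : ℕ} {F : Type*} [Field F]
    (E : Fin n → Fin n → Prop) [DecidableRel E]
    (hacyclic : ∀ v : Fin n, ∀ k, 1 ≤ k → walkCount E k v v = 0)
    (hunique : ∀ u v : Fin n, (∑ k ∈ Finset.range (n + 1), walkCount E k u v) ≤ 1)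
    (i k j : Fin n) (hik : E i k)
    (l : List (Fin n)) (hl : l.Chain' E)
    (hhead : l.head? = some k) (hlast : l.getLast? = some j)
    (hil : i ∉ l) (hnd : l.Nodup)
    (G : Matrix (Fin n) (Fin n) F)
    (hG : ∀ a b, G a b ≠ 0 → E b a)
    (hinv : IsUnit (1 - G).det) :
    (1 - G)⁻¹ j i = (1 - G)⁻¹ j k * G k i ∧
    ((1 - G)⁻¹ j k ≠ 0 → G k i = (1 - G)⁻¹ j i / (1 - G)⁻¹ j k) := by
  classical
  have hl_ne : l ≠ [] := by rintro rfl; simp at hhead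
  have hj_mem : j ∈ l := List.mem_of_getLast? hlast
  have hji : j ≠ i := fun h => hil (h ▸ hj_mem)
  -- `l` is a walk of length `l.length - 1` from `k` to `j`
  have hlen1 : 1 ≤ l.length := List.length_pos_iff.2 hl_ne
  have hwalk_l : IsWalk E (l.length - 1) k j :=
    ⟨l, hl, by omega, hhead, hlast⟩
  -- large powers of `G` vanish
  have hpow : ∀ m : ℕ, n ≤ m → (G ^ m) = 0 := by
    intro m hm
    ext b a
    by_contra h
    have hw := isWalk_of_pow_ne_zero E G hG m a b h
    have := isWalk_len_le E hacyclic hw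
    simp only [Matrix.zero_apply] at h
    omega
  -- the inverse equals the geometric sum
  have hn1 : 1 ≤ n := i.pos
  have hS : (1 - G)⁻¹ = ∑ m ∈ Finset.range (n + 1), G ^ m := by
    apply Matrix.inv_eq_left_inv
    have h1 := geom_sum_mul G (n + 1)
    have h2 : G ^ (n + 1) = 0 := hpow (n + 1) (by omega)
    rw [h2] at h1
    calc (∑ m ∈ Finset.range (n + 1), G ^ m) * (1 - G)
        = -((∑ m ∈ Finset.range (n + 1), G ^ m) * (G - 1)) := by
          rw [← neg_sub G 1, mul_neg]
      _ = -(0 - 1) := by rw [h1]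
      _ = 1 := by rw [zero_sub, neg_neg]
  -- the key step: each power entry factors through `k`
  have hstep : ∀ m : ℕ, (G ^ (m + 1)) j i = (G ^ m) j k * G k i := by
    intro m
    rw [pow_succ, Matrix.mul_apply]
    apply Finset.sum_eq_single k
    · intro a _ hak
      by_contra hne
      have h1 : (G ^ m) j a ≠ 0 := fun hz => hne (by simp [hz])
      have h2 : G a i ≠ 0 := fun hz => hne (by simp [hz])
      have hEia : E i a := hG a i h2
      have hwa : IsWalk E m a j := isWalk_of_pow_ne_zero E G hG m a j h1
      have hwi : IsWalk E (m + 1) i j := hwa.cons E hEia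
      have hwik : IsWalk E (l.length - 1 + 1) i j := hwalk_l.cons E hik
      have hb1 : m + 2 ≤ n := isWalk_len_le E hacyclic hwi
      have hb2 : l.length - 1 + 2 ≤ n := isWalk_len_le E hacyclic hwik
      have huniq := hunique i j
      by_cases hml : m = l.length - 1
      · -- same length: two distinct walks of the same length
        have h2le : 2 ≤ walkCount E (m + 1) i j :=
          two_le_walkCount E m i j a k hak hEia hik hwa (hml ▸ hwalk_l)
        have hle : walkCount E (m + 1) i j
            ≤ ∑ c ∈ Finset.range (n + 1), walkCount E c i j :=
          Finset.single_le_sum (f := fun c => walkCount E c i j)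
            (fun c _ => Nat.zero_le _) (Finset.mem_range.2 (by omega))
        omega
      · -- different lengths: two walks of different lengths
        have hc1 := one_le_walkCount E (m + 1) i j hwi
        have hc2 := one_le_walkCount E (l.length - 1 + 1) i j hwik
        have hsub : ({m + 1, l.length - 1 + 1} : Finset ℕ) ⊆ Finset.range (n + 1) := by
          intro c hc
          simp only [Finset.mem_insert, Finset.mem_singleton] at hc
          rcases hc with rfl | rfl <;> exact Finset.mem_range.2 (by omega)
        have hpair : (2 : ℕ) ≤ ∑ c ∈ ({m + 1, l.length - 1 + 1} : Finset ℕ),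
            walkCount E c i j := by
          rw [Finset.sum_pair (by omega)]
          omega
        have hcmp : ∑ c ∈ ({m + 1, l.length - 1 + 1} : Finset ℕ), walkCount E c i j
            ≤ ∑ c ∈ Finset.range (n + 1), walkCount E c i j :=
          Finset.sum_le_sum_of_subset (f := fun c => walkCount E c i j) hsub
        omega
    · intro h; exact absurd (Finset.mem_univ k) h
  have h0 : (G ^ 0) j i = 0 := by
    rw [pow_zero]; exact Matrix.one_apply_ne hji
  have hGnk : (G ^ n) j k = 0 := by rw [hpow n le_rfl]; rfl
  have hTji : (1 - G)⁻¹ j i = (∑ m ∈ Finset.range n, (G ^ m) j k) * G k i := by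
    rw [hS, Matrix.sum_apply, Finset.sum_range_succ']
    simp only [hstep, h0, add_zero]
    rw [Finset.sum_mul]
  have hTjk : (1 - G)⁻¹ j k = ∑ m ∈ Finset.range n, (G ^ m) j k := by
    rw [hS, Matrix.sum_apply, Finset.sum_range_succ, hGnk, add_zero]
  have hmain : (1 - G)⁻¹ j i = (1 - G)⁻¹ j k * G k i := by rw [hTji, hTjk]
  refine ⟨hmain, fun hne => ?_⟩
  rw [hmain, mul_comm, mul_div_assoc, div_self hne, mul_one]
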